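/- Let Γ be a finite connected simple graph with vertex set V, and let ω assign to each ordered pair (u,v) of adjacent vertices a complex number of modulus 1 such that ω(v,u) = ω(u,v)⁻¹. Suppose that for every closed walk v₀, v₁, …, v_k = v₀ in Γ the product ∏_{i=0}^{k−1} ω(v_i, v_{i+1}) lies in {−1, 1}. Then there exists λ : V → ℂ with |λ(v)| = 1 for all v, such that λ(u) · ω(u,v) · λ(v)⁻¹ ∈ {−1, 1} for every pair (u,v) of adjacent vertices. -/

import Mathlib

open SimpleGraph

private def wprod {V : Type*} (ω : V → V → ℂ) {Γ : SimpleGraph V} {a b : V}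
    (p : Γ.Walk a b) : ℂ :=
  (p.darts.map fun d => ω d.fst d.snd).prod

private lemma wprod_cons {V : Type*} (ω : V → V → ℂ) {Γ : SimpleGraph V} {a b c : V}
    (h : Γ.Adj a b) (p : Γ.Walk b c) :
    wprod ω (Walk.cons h p) = ω a b * wprod ω p := by
  simp [wprod]

private lemma wprod_append {V : Type*} (ω : V → V → ℂ) {Γ : SimpleGraph V} {a b c : V}
    (p : Γ.Walk a b) (q : Γ.Walk b c) :
    wprod ω (p.append q) = wprod ω p * wprod ω q := by
  simp [wprod, Walk.darts_append]

private lemma wprod_abs {V : Type*} {Γ : SimpleGraph V} {ω : V → V → ℂ}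
    (hmod : ∀ u v, Γ.Adj u v → ‖ω u v‖ = 1) {a b : V} (p : Γ.Walk a b) :
    ‖wprod ω p‖ = 1 := by
  induction p with
  | nil => simp [wprod]
  | cons h p ih =>
    rw [wprod_cons, norm_mul, ih, hmod _ _ h, one_mul]

private lemma wprod_reverse {V : Type*} {Γ : SimpleGraph V} {ω : V → V → ℂ}
    (hsym : ∀ u v, Γ.Adj u v → ω v u = (ω u v)⁻¹) {a b : V} (p : Γ.Walk a b) :
    wprod ω p.reverse = (wprod ω p)⁻¹ := by
  induction p with
  | nil => simp [wprod]
  | cons h p ih =>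
    rw [Walk.reverse_cons, wprod_append, ih, wprod_cons, wprod_cons]
    simp [wprod, hsym _ _ h, mul_inv, mul_comm]

/-- A unimodular edge weight `ω` on a finite connected graph whose holonomy
along every closed walk lies in `{-1, 1}` is gauge-equivalent to a weight with
values in `{-1, 1}`: there is a unimodular `lam : V → ℂ` such that
`lam(u)·ω(u,v)·lam(v)⁻¹ ∈ {-1, 1}` for every pair of adjacent vertices. -/
theorem gauge_equivalent_to_kasteleyn {V : Type*} [Fintype V]
    (Γ : SimpleGraph V) (hconn : Γ.Connected) (ω : V → V → ℂ)
    (hmod : ∀ u v, Γ.Adj u v → ‖ω u v‖ = 1)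
    (hsym : ∀ u v, Γ.Adj u v → ω v u = (ω u v)⁻¹)
    (hcycle : ∀ (v : V) (w : Γ.Walk v v),
      (w.darts.map (fun d => ω d.fst d.snd)).prod ∈ ({-1, 1} : Set ℂ)) :
    ∃ lam : V → ℂ, (∀ v, ‖lam v‖ = 1) ∧
      ∀ u v, Γ.Adj u v → lam u * ω u v * (lam v)⁻¹ ∈ ({-1, 1} : Set ℂ) := by
  obtain ⟨v₀⟩ := hconn.nonempty
  have hpath : ∀ v : V, Γ.Walk v₀ v := fun v =>
    Classical.choice (hconn.preconnected v₀ v)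
  set p : ∀ v : V, Γ.Walk v₀ v := fun v => hpath v with hp
  refine ⟨fun v => wprod ω (p v), ?_, ?_⟩
  · intro v
    exact wprod_abs hmod (p v)
  · intro u v huv
    have hq := hcycle v₀ ((p u).append (Walk.cons huv (p v).reverse))
    have hcomp : (((p u).append (Walk.cons huv (p v).reverse)).darts.map
        (fun d => ω d.fst d.snd)).prod
        = wprod ω (p u) * ω u v * (wprod ω (p v))⁻¹ := by
      rw [show (((p u).append (Walk.cons huv (p v).reverse)).darts.map
        (fun d => ω d.fst d.snd)).prod
          = wprod ω ((p u).append (Walk.cons huv (p v).reverse)) from rfl,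
        wprod_append, wprod_cons, wprod_reverse hsym]
      ring
    rw [hcomp] at hq
    exact hq
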